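/- Let K be a finite-dimensional real Lie algebra and ∂ : K* → K a linear map that is symmetric and K-invariant. Suppose P and Q are Lie subalgebras of K with K = P ⊕ Q, and suppose their annihilators P⁰, Q⁰ ⊆ K* satisfy γ'(∂γ) = 0 whenever γ, γ' ∈ P⁰ and whenever γ, γ' ∈ Q⁰. Then K* × K = (P⁰ × P) ⊕ (Q⁰ × Q), and each of P⁰ × P and Q⁰ × Q is Lagrangian for the pairing ⟨(γ,k),(γ',k')⟩ := (1/2)(γ(k') + γ'(k) + γ(∂γ')) and closed under the double bracket ⁅(γ,k),(γ',k')⁆ := (k·γ' − k'·γ + (∂γ)·γ', [k,k']). -/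

import Mathlib

open Module

/-- The coadjoint action of `k ∈ K` on `γ ∈ K*`: `(k·γ)(x) = -γ ⁅k, x⁆`. -/
def coad {K : Type*} [LieRing K] [LieAlgebra ℝ K] (k : K) (γ : Dual ℝ K) :
    Dual ℝ K :=
  -(γ ∘ₗ (LieAlgebra.ad ℝ K k))

/-- The double bracket on `K* × K` induced by a symmetric `K`-invariant map `δ : K* → K`. -/
def dblBracket {K : Type*} [LieRing K] [LieAlgebra ℝ K] (δ : Dual ℝ K →ₗ[ℝ] K)
    (e f : Dual ℝ K × K) : Dual ℝ K × K :=
  (coad e.2 f.1 - coad f.2 e.1 + coad (δ e.1) f.1, ⁅e.2, f.2⁆)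

/-- The pairing on `K* × K`: `⟨(γ,k),(γ',k')⟩ = (1/2)(γ(k') + γ'(k) + γ(δγ'))`. -/
noncomputable def dblPairing {K : Type*} [LieRing K] [LieAlgebra ℝ K] (δ : Dual ℝ K →ₗ[ℝ] K)
    (e f : Dual ℝ K × K) : ℝ :=
  (1 / 2) * (e.1 f.2 + f.1 e.2 + e.1 (δ f.1))

theorem coad_apply {K : Type*} [LieRing K] [LieAlgebra ℝ K] (k : K) (γ : Dual ℝ K) (x : K) :
    coad k γ x = -γ ⁅k, x⁆ := rfl

theorem isCompl_prod_aux {R M N : Type*} [Ring R] [AddCommGroup M] [AddCommGroup N]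
    [Module R M] [Module R N] {A A' : Submodule R M} {B B' : Submodule R N}
    (hA : IsCompl A A') (hB : IsCompl B B') : IsCompl (A.prod B) (A'.prod B') := by
  constructor
  · rw [Submodule.disjoint_def]
    rintro ⟨x, y⟩ ⟨hx, hy⟩ ⟨hx', hy'⟩
    exact Prod.ext (Submodule.disjoint_def.mp hA.disjoint x hx hx')
      (Submodule.disjoint_def.mp hB.disjoint y hy hy')
  · rw [codisjoint_iff, eq_top_iff]
    rintro ⟨x, y⟩ -
    obtain ⟨a, ha, a', ha', hx⟩ := Submodule.mem_sup.mp
      (by rw [hA.codisjoint.eq_top]; trivial : x ∈ A ⊔ A')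
    obtain ⟨b, hb, b', hb', hy⟩ := Submodule.mem_sup.mp
      (by rw [hB.codisjoint.eq_top]; trivial : y ∈ B ⊔ B')
    exact Submodule.mem_sup.mpr ⟨(a, b), ⟨ha, hb⟩, (a', b'), ⟨ha', hb'⟩,
      by simp [hx, hy]⟩

/-- Key vanishing: for `γ, γ' ∈ P⁰` and `d ∈ P`, `γ' ⁅d, δ γ⁆ = 0`. -/
theorem key_vanish {K : Type*} [LieRing K] [LieAlgebra ℝ K]
    (δ : Dual ℝ K →ₗ[ℝ] K)
    (hinv : ∀ (k : K) (γ γ' : Dual ℝ K), γ ⁅k, δ γ'⁆ + γ' ⁅k, δ γ⁆ = 0)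
    (P : LieSubalgebra ℝ K)
    (hP : ∀ γ ∈ {γ : Dual ℝ K | ∀ d ∈ P, γ d = 0},
          ∀ γ' ∈ {γ : Dual ℝ K | ∀ d ∈ P, γ d = 0}, γ' (δ γ) = 0)
    {γ γ' : Dual ℝ K} (hγ : ∀ d ∈ P, γ d = 0) (hγ' : ∀ d ∈ P, γ' d = 0)
    {d : K} (hd : d ∈ P) : γ' ⁅d, δ γ⁆ = 0 := by
  have h1 : γ' ⁅d, δ γ⁆ = coad d γ (δ γ') := by
    have := hinv d γ γ'
    rw [coad_apply]
    linarith
  rw [h1]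
  refine hP γ' hγ' (coad d γ) (fun p hp => ?_)
  rw [coad_apply]
  rw [hγ _ (P.lie_mem hd hp)]
  ring

theorem one_side {K : Type*} [LieRing K] [LieAlgebra ℝ K] [FiniteDimensional ℝ K]
    (δ : Dual ℝ K →ₗ[ℝ] K)
    (hsym : ∀ γ γ' : Dual ℝ K, γ' (δ γ) = γ (δ γ'))
    (hinv : ∀ (k : K) (γ γ' : Dual ℝ K), γ ⁅k, δ γ'⁆ + γ' ⁅k, δ γ⁆ = 0)
    (P : LieSubalgebra ℝ K)
    (hP : ∀ γ ∈ {γ : Dual ℝ K | ∀ d ∈ P, γ d = 0},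
          ∀ γ' ∈ {γ : Dual ℝ K | ∀ d ∈ P, γ d = 0}, γ' (δ γ) = 0) :
    (((P.toSubmodule.dualAnnihilator).prod P.toSubmodule : Submodule ℝ (Dual ℝ K × K)) :
        Set (Dual ℝ K × K)) =
      {e | ∀ f ∈ (P.toSubmodule.dualAnnihilator).prod P.toSubmodule, dblPairing δ e f = 0} ∧
    (∀ e ∈ (P.toSubmodule.dualAnnihilator).prod P.toSubmodule,
      ∀ f ∈ (P.toSubmodule.dualAnnihilator).prod P.toSubmodule,
      dblBracket δ e f ∈ (P.toSubmodule.dualAnnihilator).prod P.toSubmodule) := by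
  have mem_ann : ∀ γ : Dual ℝ K, γ ∈ P.toSubmodule.dualAnnihilator ↔ ∀ d ∈ P, γ d = 0 := by
    intro γ
    rw [Submodule.mem_dualAnnihilator]
    simp [LieSubalgebra.mem_toSubmodule]
  constructor
  · ext ⟨γ, k⟩
    simp only [SetLike.mem_coe, Submodule.mem_prod, Set.mem_setOf_eq]
    constructor
    · rintro ⟨hγ, hk⟩ ⟨γ', k'⟩ ⟨hγ', hk'⟩
      rw [mem_ann] at hγ hγ'
      have h3 : γ (δ γ') = 0 := by rw [hsym]; exact hP γ hγ γ' hγ'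
      simp only [dblPairing, hγ k' hk', hγ' k hk, h3]
      ring
    · intro h
      have hγ : γ ∈ P.toSubmodule.dualAnnihilator := by
        rw [mem_ann]
        intro d hd
        have := h (0, d) ⟨Submodule.zero_mem _, hd⟩
        simp only [dblPairing, LinearMap.zero_apply, map_zero] at this
        linarith
      refine ⟨hγ, ?_⟩
      rw [← Subspace.forall_mem_dualAnnihilator_apply_eq_zero_iff P.toSubmodule k]
      intro γ' hγ'
      have := h (γ', 0) ⟨hγ', Submodule.zero_mem _⟩
      have h3 : γ (δ γ') = 0 := by
        rw [hsym]
        exact hP γ ((mem_ann γ).mp hγ) γ' ((mem_ann γ').mp hγ')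
      simp only [dblPairing, map_zero, h3] at this
      linarith
  · rintro ⟨γ, k⟩ he ⟨γ', k'⟩ hf
    rw [Submodule.mem_prod] at he hf
    obtain ⟨hγ, hk⟩ := he
    obtain ⟨hγ', hk'⟩ := hf
    rw [mem_ann] at hγ hγ'
    rw [Submodule.mem_prod]
    refine ⟨?_, P.lie_mem hk hk'⟩
    rw [mem_ann]
    intro d hd
    simp only [dblBracket, LinearMap.add_apply, LinearMap.sub_apply, coad_apply]
    have h1 : γ' ⁅k, d⁆ = 0 := hγ' _ (P.lie_mem hk hd)
    have h2 : γ ⁅k', d⁆ = 0 := hγ _ (P.lie_mem hk' hd)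
    have h3 : γ' ⁅δ γ, d⁆ = 0 := by
      have := key_vanish δ hinv P hP hγ hγ' hd
      rw [← lie_skew, map_neg] at this
      linarith
    rw [h1, h2, h3]
    ring

theorem stmt11 {K : Type*} [LieRing K] [LieAlgebra ℝ K] [FiniteDimensional ℝ K]
    (δ : Dual ℝ K →ₗ[ℝ] K)
    (hsym : ∀ γ γ' : Dual ℝ K, γ' (δ γ) = γ (δ γ'))
    (hinv : ∀ (k : K) (γ γ' : Dual ℝ K), γ ⁅k, δ γ'⁆ + γ' ⁅k, δ γ⁆ = 0)
    (P Q : LieSubalgebra ℝ K)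
    (hcompl : IsCompl P.toSubmodule Q.toSubmodule)
    (hP : ∀ γ ∈ {γ : Dual ℝ K | ∀ d ∈ P, γ d = 0},
          ∀ γ' ∈ {γ : Dual ℝ K | ∀ d ∈ P, γ d = 0}, γ' (δ γ) = 0)
    (hQ : ∀ γ ∈ {γ : Dual ℝ K | ∀ d ∈ Q, γ d = 0},
          ∀ γ' ∈ {γ : Dual ℝ K | ∀ d ∈ Q, γ d = 0}, γ' (δ γ) = 0) :
    -- LP := P⁰ × P, LQ := Q⁰ × Q
    let LP : Submodule ℝ (Dual ℝ K × K) :=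
      (P.toSubmodule.dualAnnihilator).prod P.toSubmodule
    let LQ : Submodule ℝ (Dual ℝ K × K) :=
      (Q.toSubmodule.dualAnnihilator).prod Q.toSubmodule
    -- K* × K = LP ⊕ LQ
    IsCompl LP LQ ∧
    -- LP and LQ are Lagrangian for the pairing
    ((LP : Set (Dual ℝ K × K)) = {e | ∀ f ∈ LP, dblPairing δ e f = 0}) ∧
    ((LQ : Set (Dual ℝ K × K)) = {e | ∀ f ∈ LQ, dblPairing δ e f = 0}) ∧
    -- LP and LQ are closed under the double bracket
    (∀ e ∈ LP, ∀ f ∈ LP, dblBracket δ e f ∈ LP) ∧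
    (∀ e ∈ LQ, ∀ f ∈ LQ, dblBracket δ e f ∈ LQ) := by
  intro LP LQ
  obtain ⟨hPlag, hPbr⟩ := one_side δ hsym hinv P hP
  obtain ⟨hQlag, hQbr⟩ := one_side δ hsym hinv Q hQ
  exact ⟨isCompl_prod_aux (Subspace.isCompl_dualAnnihilator hcompl) hcompl,
    hPlag, hQlag, hPbr, hQbr⟩
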